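/- Let E be a sharply orthocomplete S-dominating effect algebra. Then the center C(E) is a complete Boolean algebra which is bifull in E. -/

import Mathlib

universe u v

/-- An effect algebra: a partial algebra `(E; ⊕, 0, 1)` with `0 ≠ 1`, where `⊕` is
partially defined (domain `D`), commutative and associative where defined, every
element has a unique orthosupplement (`compl`, skolemizing axiom (Eiii)), and
`1 ⊕ x` defined implies `x = 0`. -/
structure EffectAlgebra (E : Type u) where
  D : E → E → Prop
  oplus : E → E → E
  zero : E
  one : E
  zero_ne_one : zero ≠ one
  D_comm : ∀ x y, D x y → D y x
  oplus_comm : ∀ x y, D x y → oplus x y = oplus y x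
  assoc : ∀ x y z, D x y → D (oplus x y) z →
      D y z ∧ D x (oplus y z) ∧ oplus (oplus x y) z = oplus x (oplus y z)
  assoc' : ∀ x y z, D y z → D x (oplus y z) →
      D x y ∧ D (oplus x y) z ∧ oplus (oplus x y) z = oplus x (oplus y z)
  compl : E → E
  D_compl : ∀ x, D x (compl x)
  oplus_compl : ∀ x, oplus x (compl x) = one
  compl_unique : ∀ x y, D x y → oplus x y = one → y = compl x
  one_max : ∀ x, D one x → x = zero

namespace EffectAlgebra

variable {E : Type u} (A : EffectAlgebra E)

/-- The induced order: `x ≤ y` iff `x ⊕ z = y` for some `z`. -/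
def le (x y : E) : Prop := ∃ z, A.D x z ∧ A.oplus x z = y

def IsLB (S : Set E) (m : E) : Prop := ∀ x ∈ S, A.le m x
def IsUB (S : Set E) (m : E) : Prop := ∀ x ∈ S, A.le x m

/-- `m` is the infimum of `S` computed within the subposet `P`. -/
def IsInfIn (P : Set E) (S : Set E) (m : E) : Prop :=
  m ∈ P ∧ A.IsLB S m ∧ ∀ z ∈ P, A.IsLB S z → A.le z m

/-- `m` is the supremum of `S` computed within the subposet `P`. -/
def IsSupIn (P : Set E) (S : Set E) (m : E) : Prop :=
  m ∈ P ∧ A.IsUB S m ∧ ∀ z ∈ P, A.IsUB S z → A.le m z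

/-- `w` is sharp iff the meet `w ∧ w'` exists in `E` and equals `0`. -/
def Sharp (w : E) : Prop := A.IsInfIn Set.univ {w, A.compl w} A.zero

/-- The set `S(E)` of sharp elements. -/
def sharpSet : Set E := {w | A.Sharp w}

def HasMeet (x y : E) : Prop := ∃ m, A.IsInfIn Set.univ {x, y} m
def HasJoin (x y : E) : Prop := ∃ j, A.IsSupIn Set.univ {x, y} j

/-- Every `x` has a least sharp element above it, which is the infimum of the sharp
elements above `x` both in `E` and in `S(E)`. -/
def SharplyDominating : Prop :=
  ∀ x : E, ∃ w, A.Sharp w ∧ A.le x w ∧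
    A.IsInfIn Set.univ {v | A.Sharp v ∧ A.le x v} w ∧
    A.IsInfIn A.sharpSet {v | A.Sharp v ∧ A.le x v} w

/-- Sharply dominating, and `x ∧ w` exists for every `x ∈ E`, `w ∈ S(E)`. -/
def SDominating : Prop :=
  A.SharplyDominating ∧ ∀ x w : E, A.Sharp w → A.HasMeet x w

end EffectAlgebra

/-- `SumDef A l s` : the orthosum of the finite list `l` is defined and equals `s`. -/
inductive EffectAlgebra.SumDef {E : Type u} (A : EffectAlgebra E) : List E → E → Prop
  | nil : EffectAlgebra.SumDef A [] A.zero
  | cons {x : E} {l : List E} {s : E} : EffectAlgebra.SumDef A l s → A.D x s →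
      EffectAlgebra.SumDef A (x :: l) (A.oplus x s)

namespace EffectAlgebra

variable {E : Type u} (A : EffectAlgebra E)

/-- A family is orthogonal iff every finite subfamily has a defined orthosum. -/
def Orthogonal {ι : Type v} (x : ι → E) : Prop :=
  ∀ l : List ι, l.Nodup → ∃ s, A.SumDef (l.map x) s

/-- The set of finite partial orthosums of a family. -/
def finiteSums {ι : Type v} (x : ι → E) : Set E :=
  {s | ∃ l : List ι, l.Nodup ∧ A.SumDef (l.map x) s}

/-- `v = ⊕ x` : the family is orthogonal and `v` is the supremum in `E` of all
finite partial orthosums. -/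
def HasOrthoSum {ι : Type v} (x : ι → E) (v : E) : Prop :=
  A.Orthogonal x ∧ A.IsSupIn Set.univ (A.finiteSums x) v

/-- Every family dominated elementwise by an orthogonal family of sharp
elements has an orthosum. -/
def SharplyOrthocomplete : Prop :=
  ∀ (ι : Type u) (x w : ι → E), (∀ k, A.Sharp (w k)) → A.Orthogonal w →
    (∀ k, A.le (x k) (w k)) → ∃ v, A.HasOrthoSum x v

/-- `c` is central: for every `y` the meets `y ∧ c`, `y ∧ c'` exist and
`y = (y ∧ c) ∨ (y ∧ c')`. -/
def Central (c : E) : Prop :=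
  ∀ y : E, ∃ m₁ m₂, A.IsInfIn Set.univ {y, c} m₁ ∧
    A.IsInfIn Set.univ {y, A.compl c} m₂ ∧ A.IsSupIn Set.univ {m₁, m₂} y

/-- The center `C(E)`. -/
def centerSet : Set E := {c | A.Central c}

def CentrallyDominating : Prop :=
  ∀ x : E, ∃ c, A.Central c ∧ A.le x c ∧
    A.IsInfIn Set.univ {d | A.Central d ∧ A.le x d} c ∧
    A.IsInfIn A.centerSet {d | A.Central d ∧ A.le x d} c

def CentrallyOrthocomplete : Prop :=
  ∀ (ι : Type u) (x c : ι → E), (∀ k, A.Central (c k)) → A.Orthogonal c →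
    (∀ k, A.le (x k) (c k)) → ∃ v, A.HasOrthoSum x v

/-- `P` is bifull in `E`: for `S ⊆ P`, the join of `S` in `P` exists iff the join
of `S` in `E` exists, and then they coincide. -/
def Bifull (P : Set E) : Prop :=
  ∀ S ⊆ P, (∀ s, A.IsSupIn P S s → A.IsSupIn Set.univ S s) ∧
    (∀ s, A.IsSupIn Set.univ S s → A.IsSupIn P S s)

/-- The subposet `P` is a complete lattice: every subset of `P` has a supremum
(and an infimum) computed within `P`. -/
def CompleteIn (P : Set E) : Prop :=
  ∀ S ⊆ P, (∃ s, A.IsSupIn P S s) ∧ (∃ m, A.IsInfIn P S m)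

/-- `E` is a complete lattice. -/
def Complete : Prop :=
  ∀ S : Set E, (∃ s, A.IsSupIn Set.univ S s) ∧ (∃ m, A.IsInfIn Set.univ S m)

/-- The induced order of `E` is a lattice. -/
def LatticeOrdered : Prop := ∀ x y : E, A.HasMeet x y ∧ A.HasJoin x y

/-- `x ↔ y` : `x ∨ y = x ⊕ (y ⊖ (x ∧ y))`. -/
def Compatible (x y : E) : Prop :=
  ∃ m j z, A.IsInfIn Set.univ {x, y} m ∧ A.IsSupIn Set.univ {x, y} j ∧
    A.D m z ∧ A.oplus m z = y ∧ A.D x z ∧ A.oplus x z = j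

/-- An MV-effect algebra: a lattice effect algebra all of whose pairs of elements
are compatible. -/
def MV : Prop := A.LatticeOrdered ∧ ∀ x y : E, A.Compatible x y

/-- `nx = x ⊕ ⋯ ⊕ x` (`n` times) is defined. -/
def nTimesDef (n : ℕ) (x : E) : Prop := ∃ s, A.SumDef (List.replicate n x) s

/-- `ord x < ∞` for every nonzero `x`. -/
def IsArchimedean : Prop := ∀ x : E, x ≠ A.zero → ∃ n : ℕ, ¬ A.nTimesDef n x

def Atom (a : E) : Prop := a ≠ A.zero ∧ ∀ b, A.le b a → b = A.zero ∨ b = a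

def Atomic : Prop := ∀ x : E, x ≠ A.zero → ∃ a, A.Atom a ∧ A.le a x

/-- The subposet `P` (closed under `'`) is an orthomodular lattice. -/
def OrthomodularIn (P : Set E) : Prop :=
  (∀ x ∈ P, ∀ y ∈ P, (∃ m, A.IsInfIn P {x, y} m) ∧ (∃ j, A.IsSupIn P {x, y} j)) ∧
  A.zero ∈ P ∧ A.one ∈ P ∧ (∀ x ∈ P, A.compl x ∈ P) ∧
  (∀ x ∈ P, A.IsInfIn P {x, A.compl x} A.zero ∧ A.IsSupIn P {x, A.compl x} A.one) ∧
  (∀ x ∈ P, ∀ y ∈ P, A.le x y →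
    ∃ m, A.IsInfIn P {y, A.compl x} m ∧ A.IsSupIn P {x, m} y)

def DistributiveIn (P : Set E) : Prop :=
  ∀ x ∈ P, ∀ y ∈ P, ∀ z ∈ P, ∀ jyz mxy mxz m : E,
    A.IsSupIn P {y, z} jyz → A.IsInfIn P {x, y} mxy → A.IsInfIn P {x, z} mxz →
    A.IsInfIn P {x, jyz} m → A.IsSupIn P {mxy, mxz} m

/-- The subposet `P` is a Boolean algebra (complemented distributive lattice with
bounds, complement given by `'`). -/
def BooleanIn (P : Set E) : Prop :=
  (∀ x ∈ P, ∀ y ∈ P, (∃ m, A.IsInfIn P {x, y} m) ∧ (∃ j, A.IsSupIn P {x, y} j)) ∧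
  A.zero ∈ P ∧ A.one ∈ P ∧ (∀ x ∈ P, A.compl x ∈ P) ∧
  (∀ x ∈ P, A.IsInfIn P {x, A.compl x} A.zero ∧ A.IsSupIn P {x, A.compl x} A.one) ∧
  A.DistributiveIn P

/-- A block: a maximal set of pairwise compatible elements. -/
def Block (M : Set E) : Prop :=
  (∀ x ∈ M, ∀ y ∈ M, A.Compatible x y) ∧
  ∀ N : Set E, M ⊆ N → (∀ x ∈ N, ∀ y ∈ N, A.Compatible x y) → N = M

def AtomIn (M : Set E) (a : E) : Prop :=
  a ∈ M ∧ a ≠ A.zero ∧ ∀ b ∈ M, A.le b a → b = A.zero ∨ b = a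

def AtomicIn (M : Set E) : Prop :=
  ∀ x ∈ M, x ≠ A.zero → ∃ a, A.AtomIn M a ∧ A.le a x

end EffectAlgebra

namespace EffectAlgebra

variable {E : Type u} {A : EffectAlgebra E}

lemma compl_compl (x : E) : A.compl (A.compl x) = x := by
  have h := A.D_compl x
  have h2 := A.oplus_compl x
  have := A.compl_unique (A.compl x) x (A.D_comm _ _ h)
    (by rw [A.oplus_comm _ _ (A.D_comm _ _ h)]; exact h2)
  exact this.symm

lemma compl_one : A.compl A.one = A.zero :=
  A.one_max _ (A.D_compl A.one)

lemma compl_zero : A.compl A.zero = A.one := by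
  rw [← @compl_one E A, compl_compl]

lemma D_one_zero : A.D A.one A.zero := by
  have := A.D_compl A.one; rwa [compl_one] at this

lemma oplus_one_zero : A.oplus A.one A.zero = A.one := by
  have := A.oplus_compl A.one; rwa [compl_one] at this

lemma D_zero_right (x : E) : A.D x A.zero := by
  -- first for compl-images, then use compl_compl
  have key : ∀ y : E, A.D (A.compl y) A.zero := by
    intro y
    have h1 : A.D y (A.compl y) := A.D_compl y
    have h2 : A.D (A.oplus y (A.compl y)) A.zero := by
      rw [A.oplus_compl]; exact D_one_zero
    exact (A.assoc y (A.compl y) A.zero h1 h2).1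
  have := key (A.compl x); rwa [compl_compl] at this

lemma oplus_zero (x : E) : A.oplus x A.zero = x := by
  have key : ∀ y : E, A.oplus (A.compl y) A.zero = A.compl y := by
    intro y
    have h1 : A.D y (A.compl y) := A.D_compl y
    have h2 : A.D (A.oplus y (A.compl y)) A.zero := by
      rw [A.oplus_compl]; exact D_one_zero
    obtain ⟨h3, h4, h5⟩ := A.assoc y (A.compl y) A.zero h1 h2
    have h6 : A.oplus y (A.oplus (A.compl y) A.zero) = A.one := by
      rw [← h5, A.oplus_compl, oplus_one_zero]
    exact A.compl_unique y _ h4 h6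
  have := key (A.compl x); rwa [compl_compl] at this

lemma D_zero_left (x : E) : A.D A.zero x := A.D_comm _ _ (D_zero_right x)

lemma zero_oplus (x : E) : A.oplus A.zero x = x := by
  rw [A.oplus_comm _ _ (D_zero_left x), oplus_zero]

lemma cancel {x a b : E} (ha : A.D x a) (hb : A.D x b)
    (h : A.oplus x a = A.oplus x b) : a = b := by
  set s := A.oplus x a with hs
  have hseq : A.oplus x b = s := h.symm
  have key : ∀ c : E, A.D x c → A.oplus x c = s → c = A.compl (A.oplus (A.compl s) x) := by
    intro c hc hcs
    have h1 : A.D s (A.compl s) := A.D_compl s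
    have h2 : A.D (A.oplus x c) (A.compl s) := by rw [hcs]; exact h1
    obtain ⟨h3, h4, h5⟩ := A.assoc x c (A.compl s) hc h2
    have h6 : A.oplus x (A.oplus c (A.compl s)) = A.one := by
      rw [← h5, hcs, A.oplus_compl]
    -- (c ⊕ s') ⊕ x = 1
    have h7 : A.D (A.oplus c (A.compl s)) x := A.D_comm _ _ h4
    obtain ⟨h8, h9, h10⟩ := A.assoc c (A.compl s) x h3 h7
    have h11 : A.oplus c (A.oplus (A.compl s) x) = A.one := by
      rw [← h10, A.oplus_comm _ _ h7]; exact h6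
    have := A.compl_unique c _ h9 h11
    rw [this, compl_compl]
  rw [key a ha rfl, key b hb hseq]

lemma eq_zero_of_oplus_eq_zero {a b : E} (h : A.D a b) (heq : A.oplus a b = A.zero) :
    a = A.zero ∧ b = A.zero := by
  have h2 : A.D (A.oplus a b) A.one := by
    rw [heq]; exact A.D_comm _ _ D_one_zero
  obtain ⟨h3, h4, h5⟩ := A.assoc a b A.one h h2
  have hb : b = A.zero := A.one_max b (A.D_comm _ _ h3)
  subst hb
  rw [oplus_zero] at heq
  exact ⟨heq, rfl⟩

lemma le_refl (x : E) : A.le x x := ⟨A.zero, D_zero_right x, oplus_zero x⟩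

lemma zero_le (x : E) : A.le A.zero x := ⟨x, D_zero_left x, zero_oplus x⟩

lemma le_one (x : E) : A.le x A.one := ⟨A.compl x, A.D_compl x, A.oplus_compl x⟩

lemma le_zero_iff {x : E} : A.le x A.zero ↔ x = A.zero := by
  constructor
  · rintro ⟨z, hz, h⟩; exact (eq_zero_of_oplus_eq_zero hz h).1
  · rintro rfl; exact le_refl _

lemma le_trans {x y z : E} (h1 : A.le x y) (h2 : A.le y z) : A.le x z := by
  obtain ⟨a, ha, rfl⟩ := h1
  obtain ⟨b, hb, rfl⟩ := h2
  obtain ⟨h3, h4, h5⟩ := A.assoc x a b ha hb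
  exact ⟨A.oplus a b, h4, h5.symm⟩

lemma le_antisymm {x y : E} (h1 : A.le x y) (h2 : A.le y x) : x = y := by
  obtain ⟨a, ha, rfl⟩ := h1
  obtain ⟨b, hb, hbx⟩ := h2
  obtain ⟨h3, h4, h5⟩ := A.assoc x a b ha hb
  have : A.oplus x (A.oplus a b) = A.oplus x A.zero := by
    rw [← h5, hbx, oplus_zero]
  have h6 := cancel h4 (D_zero_right x) this
  obtain ⟨ha0, hb0⟩ := eq_zero_of_oplus_eq_zero h3 h6
  rw [ha0, oplus_zero]

lemma le_oplus_left {a b : E} (h : A.D a b) : A.le a (A.oplus a b) := ⟨b, h, rfl⟩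

lemma le_oplus_right {a b : E} (h : A.D a b) : A.le b (A.oplus a b) :=
  ⟨a, A.D_comm _ _ h, (A.oplus_comm _ _ h).symm⟩

/-- `D x y` implies `y ≤ x'`. -/
lemma le_compl_of_D {x y : E} (h : A.D x y) : A.le y (A.compl x) := by
  set s := A.oplus x y
  have h1 : A.D s (A.compl s) := A.D_compl s
  obtain ⟨h2, h3, h4⟩ := A.assoc x y (A.compl s) h h1
  have h5 : A.oplus x (A.oplus y (A.compl s)) = A.one := by
    rw [← h4, A.oplus_compl]
  exact ⟨A.compl s, h2, A.compl_unique x _ h3 h5⟩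

lemma D_of_le_compl {x y : E} (h : A.le x (A.compl y)) : A.D x y := by
  obtain ⟨z, hz, hzy⟩ := h
  have h1 : A.D (A.compl y) y := A.D_comm _ _ (A.D_compl y)
  have h2 : A.D (A.oplus x z) y := by rw [hzy]; exact h1
  obtain ⟨h3, h4, _⟩ := A.assoc x z y hz h2
  have h5 : A.D x (A.oplus y z) := by
    rwa [A.oplus_comm _ _ h3] at h4
  exact (A.assoc' x y z (A.D_comm _ _ h3) h5).1

lemma le_compl_iff_D {x y : E} : A.le x (A.compl y) ↔ A.D x y :=
  ⟨D_of_le_compl, fun h => le_compl_of_D (A.D_comm _ _ h)⟩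

lemma compl_le_compl {x y : E} (h : A.le x y) : A.le (A.compl y) (A.compl x) := by
  obtain ⟨z, hz, rfl⟩ := h
  have h1 : A.D (A.oplus x z) (A.compl (A.oplus x z)) := A.D_compl _
  obtain ⟨h2, h3, h4⟩ := A.assoc x z _ hz h1
  have h5 : A.oplus x (A.oplus z (A.compl (A.oplus x z))) = A.one := by
    rw [← h4, A.oplus_compl]
  have h6 := A.compl_unique x _ h3 h5
  -- compl x = z ⊕ (x⊕z)'
  refine ⟨z, ?_, ?_⟩
  · exact A.D_comm _ _ h2
  · rw [A.oplus_comm _ _ (A.D_comm _ _ h2), ← h6]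

lemma le_of_compl_le_compl {x y : E} (h : A.le (A.compl y) (A.compl x)) : A.le x y := by
  have := compl_le_compl (A := A) h
  rwa [compl_compl, compl_compl] at this

/-- monotonicity of ⊕. -/
lemma oplus_le_oplus {a a₁ b b₁ : E} (ha : A.le a a₁) (hb : A.le b b₁)
    (h : A.D a₁ b₁) : A.D a b ∧ A.le (A.oplus a b) (A.oplus a₁ b₁) := by
  obtain ⟨p, hp, rfl⟩ := ha
  obtain ⟨q, hq, rfl⟩ := hb
  -- D (a⊕p) (b⊕q)
  obtain ⟨h1, h2, h3⟩ := A.assoc' (A.oplus a p) b q hq h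
  -- h1 : D (a⊕p) b, h2 : D ((a⊕p)⊕b) q, h3 : ((a⊕p)⊕b)⊕q = (a⊕p)⊕(b⊕q)
  obtain ⟨h4, h5, h6⟩ := A.assoc a p b hp h1
  -- h4 : D p b, h5 : D a (p⊕b), h6 : (a⊕p)⊕b = a⊕(p⊕b)
  have h5' : A.D a (A.oplus b p) := by rwa [A.oplus_comm _ _ h4] at h5
  obtain ⟨hab, h7, h8⟩ := A.assoc' a b p (A.D_comm _ _ h4) h5'
  -- hab : D a b, h7 : D (a⊕b) p, h8 : (a⊕b)⊕p = a⊕(b⊕p)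
  refine ⟨hab, ?_⟩
  have e1 : A.oplus (A.oplus a p) b = A.oplus (A.oplus a b) p := by
    rw [h6, h8, A.oplus_comm _ _ h4]
  have h2' : A.D (A.oplus (A.oplus a b) p) q := by rwa [e1] at h2
  obtain ⟨hpq, h9, h10⟩ := A.assoc (A.oplus a b) p q h7 h2'
  exact ⟨A.oplus p q, h9, by rw [← h10, ← e1, h3]⟩

lemma le_cancel {x a b : E} (ha : A.D x a) (hb : A.D x b)
    (h : A.le (A.oplus x a) (A.oplus x b)) : A.le a b := by
  obtain ⟨c, hc, hceq⟩ := h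
  obtain ⟨h1, h2, h3⟩ := A.assoc x a c ha hc
  have : A.oplus x (A.oplus a c) = A.oplus x b := by rw [← h3, hceq]
  have h4 := cancel h2 hb this
  exact ⟨c, h1, h4⟩

end EffectAlgebra
namespace EffectAlgebra

variable {E : Type u} {A : EffectAlgebra E}

lemma isLB_pair {x y m : E} (hx : A.le m x) (hy : A.le m y) :
    A.IsLB {x, y} m := by
  rintro z (rfl | rfl); exact hx; exact hy

lemma isUB_pair {x y m : E} (hx : A.le x m) (hy : A.le y m) :
    A.IsUB {x, y} m := by
  rintro z (rfl | rfl); exact hx; exact hy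

lemma IsLB.left {x y m : E} (h : A.IsLB {x, y} m) : A.le m x :=
  h x (Set.mem_insert _ _)

lemma IsLB.right {x y m : E} (h : A.IsLB {x, y} m) : A.le m y :=
  h y (Set.mem_insert_of_mem _ rfl)

lemma IsUB.left {x y m : E} (h : A.IsUB {x, y} m) : A.le x m :=
  h x (Set.mem_insert _ _)

lemma IsUB.right {x y m : E} (h : A.IsUB {x, y} m) : A.le y m :=
  h y (Set.mem_insert_of_mem _ rfl)

/-- Shorthand: `m` is the meet of `x,y` in the whole algebra. -/
def IsMeet (A : EffectAlgebra E) (x y m : E) : Prop := A.IsInfIn Set.univ {x, y} m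

/-- Shorthand: `j` is the join of `x,y` in the whole algebra. -/
def IsJoin (A : EffectAlgebra E) (x y j : E) : Prop := A.IsSupIn Set.univ {x, y} j

lemma isMeet_intro {x y m : E} (hx : A.le m x) (hy : A.le m y)
    (h : ∀ z, A.le z x → A.le z y → A.le z m) : A.IsMeet x y m :=
  ⟨trivial, isLB_pair hx hy, fun z _ hz => h z hz.left hz.right⟩

lemma isJoin_intro {x y j : E} (hx : A.le x j) (hy : A.le y j)
    (h : ∀ z, A.le x z → A.le y z → A.le j z) : A.IsJoin x y j :=
  ⟨trivial, isUB_pair hx hy, fun z _ hz => h z hz.left hz.right⟩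

lemma IsMeet.le_left {x y m : E} (h : A.IsMeet x y m) : A.le m x := h.2.1.left
lemma IsMeet.le_right {x y m : E} (h : A.IsMeet x y m) : A.le m y := h.2.1.right
lemma IsMeet.ge {x y m z : E} (h : A.IsMeet x y m) (h1 : A.le z x) (h2 : A.le z y) :
    A.le z m := h.2.2 z trivial (isLB_pair h1 h2)

lemma IsJoin.le_left {x y j : E} (h : A.IsJoin x y j) : A.le x j := h.2.1.left
lemma IsJoin.le_right {x y j : E} (h : A.IsJoin x y j) : A.le y j := h.2.1.right
lemma IsJoin.le {x y j z : E} (h : A.IsJoin x y j) (h1 : A.le x z) (h2 : A.le y z) :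
    A.le j z := h.2.2 z trivial (isUB_pair h1 h2)

lemma isInfIn_unique {P S : Set E} {m m' : E} (h : A.IsInfIn P S m)
    (h' : A.IsInfIn P S m') : m = m' :=
  le_antisymm (h'.2.2 m h.1 h.2.1) (h.2.2 m' h'.1 h'.2.1)

lemma isSupIn_unique {P S : Set E} {m m' : E} (h : A.IsSupIn P S m)
    (h' : A.IsSupIn P S m') : m = m' :=
  le_antisymm (h.2.2 m' h'.1 h'.2.1) (h'.2.2 m h.1 h.2.1)

lemma isInfIn_of_univ {P S : Set E} {m : E} (h : A.IsInfIn Set.univ S m)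
    (hm : m ∈ P) : A.IsInfIn P S m :=
  ⟨hm, h.2.1, fun z _ hz => h.2.2 z trivial hz⟩

lemma isSupIn_of_univ {P S : Set E} {m : E} (h : A.IsSupIn Set.univ S m)
    (hm : m ∈ P) : A.IsSupIn P S m :=
  ⟨hm, h.2.1, fun z _ hz => h.2.2 z trivial hz⟩

lemma isMeet_comm {x y m : E} (h : A.IsMeet x y m) : A.IsMeet y x m := by
  unfold IsMeet at *; rwa [Set.pair_comm y x]

lemma isJoin_comm {x y m : E} (h : A.IsJoin x y m) : A.IsJoin y x m := by
  unfold IsJoin at *; rwa [Set.pair_comm y x]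

lemma isMeet_self_of_le {x y : E} (h : A.le x y) : A.IsMeet x y x :=
  isMeet_intro (le_refl x) h (fun _ hz _ => hz)

lemma isMeet_zero_left (y : E) : A.IsMeet A.zero y A.zero :=
  isMeet_intro (le_refl _) (zero_le y) (fun _ hz _ => hz)

lemma isMeet_zero_right (y : E) : A.IsMeet y A.zero A.zero :=
  isMeet_comm (isMeet_zero_left y)

lemma isJoin_zero_left (y : E) : A.IsJoin A.zero y y :=
  isJoin_intro (zero_le y) (le_refl y) (fun _ _ hz => hz)

end EffectAlgebra
namespace EffectAlgebra

variable {E : Type u} {A : EffectAlgebra E}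

lemma oplus_rearrange {a p b q : E} (h1 : A.D a p) (h2 : A.D b q)
    (h : A.D (A.oplus a p) (A.oplus b q)) :
    A.D a b ∧ A.D p q ∧ A.D (A.oplus a b) (A.oplus p q) ∧
      A.oplus (A.oplus a b) (A.oplus p q) = A.oplus (A.oplus a p) (A.oplus b q) := by
  obtain ⟨h3, h4, h5⟩ := A.assoc' (A.oplus a p) b q h2 h
  obtain ⟨h6, h7, h8⟩ := A.assoc a p b h1 h3
  have h7' : A.D a (A.oplus b p) := by rwa [A.oplus_comm _ _ h6] at h7
  obtain ⟨hab, h9, h10⟩ := A.assoc' a b p (A.D_comm _ _ h6) h7'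
  have e1 : A.oplus (A.oplus a p) b = A.oplus (A.oplus a b) p := by
    rw [h8, h10, A.oplus_comm _ _ h6]
  have h4' : A.D (A.oplus (A.oplus a b) p) q := by rwa [e1] at h4
  obtain ⟨hpq, h11, h12⟩ := A.assoc (A.oplus a b) p q h9 h4'
  exact ⟨hab, hpq, h11, by rw [← h12, ← e1, h5]⟩

lemma central_elim {c : E} (hc : A.Central c) (y : E) :
    ∃ m r, A.IsMeet y c m ∧ A.IsMeet y (A.compl c) r ∧ A.IsJoin m r y :=
  hc y

/-- `c ∨ c' = 1` for central `c`. -/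
lemma central_join_compl {c : E} (hc : A.Central c) : A.IsJoin c (A.compl c) A.one := by
  obtain ⟨m, r, h1, h2, h3⟩ := central_elim hc A.one
  have hm : m = c := isInfIn_unique h1
    (isMeet_intro (le_one c) (le_refl c) (fun z _ h => h))
  have hr : r = A.compl c := isInfIn_unique h2
    (isMeet_intro (le_one _) (le_refl _) (fun z _ h => h))
  rwa [hm, hr] at h3

/-- A common lower bound of `c` and `c'` is `0` for central `c`. -/
lemma central_bot {c : E} (hc : A.Central c) {t : E}
    (h1 : A.le t c) (h2 : A.le t (A.compl c)) : t = A.zero := by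
  have hub1 : A.le c (A.compl t) := by
    have := compl_le_compl (A := A) h2
    rwa [compl_compl] at this
  have hub2 : A.le (A.compl c) (A.compl t) := compl_le_compl h1
  have h3 : A.le A.one (A.compl t) := (central_join_compl hc).le hub1 hub2
  have h4 : A.compl t = A.one := le_antisymm (le_one _) h3
  have : t = A.compl (A.compl t) := (compl_compl t).symm
  rw [this, h4, compl_one]

lemma Central.sharp {c : E} (hc : A.Central c) : A.Sharp c :=
  ⟨trivial, isLB_pair (zero_le _) (zero_le _),
    fun z _ hz => le_zero_iff.mpr (central_bot hc hz.left hz.right)⟩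

lemma Sharp.compl {c : E} (hc : A.Sharp c) : A.Sharp (A.compl c) := by
  unfold Sharp at *
  rw [compl_compl, Set.pair_comm]
  exact hc

/-- For central `c`, the decomposition `y = (y ∧ c) ⊕ (y ∧ c')`. -/
lemma central_decomp {c : E} (hc : A.Central c) (y : E) :
    ∃ m r, A.IsMeet y c m ∧ A.IsMeet y (A.compl c) r ∧ A.D m r ∧ A.oplus m r = y := by
  obtain ⟨m, r, h1, h2, h3⟩ := central_elim hc y
  have hD : A.D m r := by
    refine A.D_comm _ _ (D_of_le_compl ?_)
    exact le_trans h2.le_right (compl_le_compl h1.le_right)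
  have hys : A.le y (A.oplus m r) := h3.le (le_oplus_left hD) (le_oplus_right hD)
  obtain ⟨d, hd, hdeq⟩ := hys
  obtain ⟨a₁, ha₁, ha₁eq⟩ := h1.le_left
  obtain ⟨b₁, hb₁, hb₁eq⟩ := h2.le_left
  -- y ⊕ d = m ⊕ r, y = m ⊕ a₁ gives r = a₁ ⊕ d
  have hda : A.le d r := by
    have h4 : A.D (A.oplus m a₁) d := by rw [ha₁eq]; exact hd
    obtain ⟨h5, h6, h7⟩ := A.assoc m a₁ d ha₁ h4
    have : A.oplus m (A.oplus a₁ d) = A.oplus m r := by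
      rw [← h7, ha₁eq, hdeq]
    have h8 := cancel h6 hD this
    rw [← h8]; exact le_oplus_right h5
  have hdb : A.le d m := by
    have h4 : A.D (A.oplus r b₁) d := by rw [hb₁eq]; exact hd
    obtain ⟨h5, h6, h7⟩ := A.assoc r b₁ d hb₁ h4
    have : A.oplus r (A.oplus b₁ d) = A.oplus r m := by
      rw [← h7, hb₁eq, hdeq, A.oplus_comm _ _ hD]
    have h8 := cancel h6 (A.D_comm _ _ hD) this
    rw [← h8]; exact le_oplus_right h5
  have hd0 : d = A.zero :=
    central_bot hc (le_trans hdb h1.le_right) (le_trans hda h2.le_right)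
  refine ⟨m, r, h1, h2, hD, ?_⟩
  rw [← hdeq, hd0, oplus_zero]

/-- For central `c`, `a ≤ c`, `b ≤ c'`: `(a⊕b) ∧ c = a` and `(a⊕b) ∧ c' = b`. -/
lemma central_meet_oplus {c a b : E} (hc : A.Central c) (ha : A.le a c)
    (hb : A.le b (A.compl c)) (hD : A.D a b) :
    A.IsMeet (A.oplus a b) c a ∧ A.IsMeet (A.oplus a b) (A.compl c) b := by
  obtain ⟨m, r, h1, h2, hmr, heq⟩ := central_decomp hc (A.oplus a b)
  have ham : A.le a m := h1.ge (le_oplus_left hD) ha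
  have hbr : A.le b r := h2.ge (le_oplus_right hD) hb
  obtain ⟨p, hp, hpeq⟩ := ham
  obtain ⟨q, hq, hqeq⟩ := hbr
  have hmr' : A.D (A.oplus a p) (A.oplus b q) := by rw [hpeq, hqeq]; exact hmr
  obtain ⟨hab, hpq, hD2, heq2⟩ := oplus_rearrange hp hq hmr'
  have : A.oplus (A.oplus a b) (A.oplus p q) = A.oplus (A.oplus a b) A.zero := by
    rw [heq2, hpeq, hqeq, heq, oplus_zero]
  have hpq0 := cancel hD2 (D_zero_right _) this
  obtain ⟨hp0, hq0⟩ := eq_zero_of_oplus_eq_zero hpq hpq0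
  have hma : m = a := by rw [← hpeq, hp0, oplus_zero]
  have hrb : r = b := by rw [← hqeq, hq0, oplus_zero]
  rw [hma] at h1
  rw [hrb] at h2
  exact ⟨h1, h2⟩

end EffectAlgebra
namespace EffectAlgebra

variable {E : Type u} {A : EffectAlgebra E}

/-- For central `c`, `a ≤ c`, `b ≤ c'`: `a ⊕ b` is defined and is the join of `a, b`. -/
lemma central_join_oplus {c a b : E} (hc : A.Central c) (ha : A.le a c)
    (hb : A.le b (A.compl c)) : A.D a b ∧ A.IsJoin a b (A.oplus a b) := by
  have hD : A.D a b := by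
    refine A.D_comm _ _ (D_of_le_compl ?_)
    exact le_trans hb (compl_le_compl ha)
  refine ⟨hD, isJoin_intro (le_oplus_left hD) (le_oplus_right hD) ?_⟩
  intro z h1 h2
  obtain ⟨m, r, hm, hr, hmr, heq⟩ := central_decomp hc z
  have h3 : A.le a m := hm.ge h1 ha
  have h4 : A.le b r := hr.ge h2 hb
  have := (oplus_le_oplus h3 h4 hmr).2
  rwa [heq] at this

lemma central_of_decomp {e : E}
    (H : ∀ y, ∃ m r, A.IsMeet y e m ∧ A.IsMeet y (A.compl e) r ∧
      A.D m r ∧ A.oplus m r = y) : A.Central e := by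
  intro y
  obtain ⟨m, r, hm, hr, hD, heq⟩ := H y
  refine ⟨m, r, hm, hr, isJoin_intro hm.le_left hr.le_left ?_⟩
  intro z h1 h2
  obtain ⟨mz, rz, hmz, hrz, hDz, heqz⟩ := H z
  have h3 : A.le m mz := hmz.ge h1 hm.le_right
  have h4 : A.le r rz := hrz.ge h2 hr.le_right
  have := (oplus_le_oplus h3 h4 hDz).2
  rwa [heq, heqz] at this

lemma central_zero : A.Central A.zero := by
  intro y
  refine ⟨A.zero, y, isMeet_zero_right y, ?_, isJoin_zero_left y⟩
  rw [compl_zero]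
  exact isMeet_self_of_le (le_one y)

lemma central_one : A.Central A.one := by
  intro y
  refine ⟨y, A.zero, isMeet_self_of_le (le_one y), ?_, isJoin_comm (isJoin_zero_left y)⟩
  rw [compl_one]
  exact isMeet_zero_right y

lemma Central.compl {c : E} (hc : A.Central c) : A.Central (A.compl c) := by
  intro y
  obtain ⟨m, r, h1, h2, h3⟩ := central_elim hc y
  refine ⟨r, m, h2, ?_, isJoin_comm h3⟩
  rw [compl_compl]
  exact h1

/-- Distributivity: for central `c`, `c ∧ (y ∨ z) = (c ∧ y) ∨ (c ∧ z)`. -/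
lemma central_distrib {c y z w my mz m : E} (hc : A.Central c)
    (hw : A.IsJoin y z w) (hm : A.IsMeet w c m)
    (hmy : A.IsMeet y c my) (hmz : A.IsMeet z c mz) : A.IsJoin my mz m := by
  refine isJoin_intro
    (hm.ge (le_trans hmy.le_left hw.le_left) hmy.le_right)
    (hm.ge (le_trans hmz.le_left hw.le_right) hmz.le_right) ?_
  intro u h1 h2
  obtain ⟨mu, ru, hmu, hru, hDu, hequ⟩ := central_decomp hc u
  have hDv : A.D mu (A.compl c) := by
    refine D_of_le_compl ?_
    rw [compl_compl]
    exact hmu.le_right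
  set v := A.oplus mu (A.compl c) with hv
  have hyv : A.le y v := by
    obtain ⟨m₁, r₁, hy1, hy2, hyD, hyeq⟩ := central_decomp hc y
    have e1 : m₁ = my := isInfIn_unique hy1 hmy
    have h3 : A.le m₁ mu := hmu.ge (e1 ▸ h1) hy1.le_right
    have := (oplus_le_oplus h3 hy2.le_right hDv).2
    rwa [hyeq] at this
  have hzv : A.le z v := by
    obtain ⟨m₁, r₁, hz1, hz2, hzD, hzeq⟩ := central_decomp hc z
    have e1 : m₁ = mz := isInfIn_unique hz1 hmz
    have h3 : A.le m₁ mu := hmu.ge (e1 ▸ h2) hz1.le_right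
    have := (oplus_le_oplus h3 hz2.le_right hDv).2
    rwa [hzeq] at this
  have hwv : A.le w v := hw.le hyv hzv
  have hvc : A.IsMeet v c mu :=
    (central_meet_oplus hc hmu.le_right (le_refl _) hDv).1
  have : A.le m mu := hvc.ge (le_trans hm.le_left hwv) hm.le_right
  exact le_trans this hmu.le_left

/-- Center is closed under binary meets. -/
lemma central_meet {c d e : E} (hc : A.Central c) (hd : A.Central d)
    (hm : A.IsMeet c d e) : A.Central e := by
  -- c = e ⊕ f with f = c ∧ d', and e' = f ⊕ c'
  obtain ⟨e₁, f, he₁, hf, hDef, heqc⟩ := central_decomp hd c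
  have he₁e : e₁ = e := isInfIn_unique he₁ hm
  rw [he₁e] at he₁ hDef heqc
  have hcompl : A.D f (A.compl c) ∧ A.oplus f (A.compl c) = A.compl e := by
    have h1 : A.D (A.oplus e f) (A.compl c) := by rw [heqc]; exact A.D_compl c
    obtain ⟨h2, h3, h4⟩ := A.assoc e f (A.compl c) hDef h1
    refine ⟨h2, A.compl_unique e _ h3 ?_⟩
    rw [← h4, heqc, A.oplus_compl]
  apply central_of_decomp
  intro y
  obtain ⟨a, a₂, hya, hya₂, hDa, heqy⟩ := central_decomp hc y
  obtain ⟨b, b₂, hab, hab₂, hDb, heqa⟩ := central_decomp hd a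
  have hmb : A.IsMeet y e b := by
    refine isMeet_intro (le_trans hab.le_left hya.le_left)
      (hm.ge (le_trans hab.le_left hya.le_right) hab.le_right) ?_
    intro t ht1 ht2
    exact hab.ge (hya.ge ht1 (le_trans ht2 hm.le_left)) (le_trans ht2 hm.le_right)
  have hDr : A.D b₂ a₂ := by
    refine A.D_comm _ _ (D_of_le_compl ?_)
    refine le_trans hya₂.le_right (compl_le_compl ?_)
    exact le_trans hab₂.le_left hya.le_right
  set r := A.oplus b₂ a₂ with hrdef
  have hDbr : A.D b r ∧ A.oplus b r = y := by
    have h1 : A.D (A.oplus b b₂) a₂ := by rw [heqa]; exact hDa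
    obtain ⟨h2, h3, h4⟩ := A.assoc b b₂ a₂ hDb h1
    exact ⟨h3, by rw [← h4, heqa, heqy]⟩
  have hbf : A.le b₂ f :=
    hf.ge (le_trans hab₂.le_left hya.le_right) hab₂.le_right
  have hrle : A.le r (A.compl e) := by
    rw [← hcompl.2]
    exact (oplus_le_oplus hbf hya₂.le_right hcompl.1).2
  have hfc : A.IsMeet (A.compl e) c f := by
    have := (central_meet_oplus hc hf.le_left (le_refl _) hcompl.1).1
    rwa [hcompl.2] at this
  have hmr : A.IsMeet y (A.compl e) r := by
    refine isMeet_intro (hDbr.2 ▸ le_oplus_right hDbr.1) hrle ?_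
    intro t ht1 ht2
    obtain ⟨t₁, t₂, ht₁, ht₂, hDt, heqt⟩ := central_decomp hc t
    have h2 : A.le t₂ a₂ := hya₂.ge (le_trans ht₂.le_left ht1) ht₂.le_right
    have h3 : A.le t₁ f := hfc.ge (le_trans ht₁.le_left ht2) ht₁.le_right
    have h4 : A.le t₁ b₂ :=
      hab₂.ge (hya.ge (le_trans ht₁.le_left ht1) ht₁.le_right)
        (le_trans h3 hf.le_right)
    have := (oplus_le_oplus h4 h2 hDr).2
    rwa [heqt] at this
  exact ⟨b, r, hmb, hmr, hDbr.1, hDbr.2⟩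

end EffectAlgebra
namespace EffectAlgebra

variable {E : Type u} {A : EffectAlgebra E}

lemma central_meet_exists {d : E} (hd : A.Central d) (y : E) :
    ∃ m, A.IsMeet y d m := by
  obtain ⟨m, r, h1, _, _⟩ := hd y
  exact ⟨m, h1⟩

lemma central_join_exists {c d : E} (hc : A.Central c) (hd : A.Central d) :
    ∃ j, A.IsJoin c d j ∧ A.Central j := by
  obtain ⟨e, he⟩ := central_meet_exists hd.compl (A.compl c)
  have hce : A.Central e := central_meet hc.compl hd.compl he
  refine ⟨A.compl e, ?_, hce.compl⟩
  refine isJoin_intro ?_ ?_ ?_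
  · refine le_of_compl_le_compl ?_
    rw [compl_compl]
    exact he.le_left
  · refine le_of_compl_le_compl ?_
    rw [compl_compl]
    exact he.le_right
  · intro z h1 h2
    refine le_of_compl_le_compl ?_
    rw [compl_compl]
    exact he.ge (compl_le_compl h1) (compl_le_compl h2)

lemma central_join {c d j : E} (hc : A.Central c) (hd : A.Central d)
    (hj : A.IsJoin c d j) : A.Central j := by
  obtain ⟨j', hj', hcj'⟩ := central_join_exists hc hd
  rwa [isSupIn_unique hj hj']

lemma sumDef_nil_eq {s : E} (h : A.SumDef [] s) : s = A.zero := by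
  cases h; rfl

lemma sumDef_cons_elim {x : E} {l : List E} {s : E} (h : A.SumDef (x :: l) s) :
    ∃ t, A.SumDef l t ∧ A.D x t ∧ s = A.oplus x t := by
  cases h with
  | cons ht hD => exact ⟨_, ht, hD, rfl⟩

lemma sumDef_perm {l l' : List E} (h : l.Perm l') :
    ∀ {s : E}, A.SumDef l s → A.SumDef l' s := by
  induction h with
  | nil => exact fun hs => hs
  | cons x h ih =>
    intro s hs
    obtain ⟨t, ht, hD, rfl⟩ := sumDef_cons_elim hs
    exact SumDef.cons (ih ht) hD
  | swap x y l =>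
    intro s hs
    obtain ⟨t, ht, hD1, rfl⟩ := sumDef_cons_elim hs
    obtain ⟨t₂, ht₂, hD2, rfl⟩ := sumDef_cons_elim ht
    obtain ⟨h1, h2, h3⟩ := A.assoc' y x t₂ hD2 hD1
    have h1' : A.D x y := A.D_comm _ _ h1
    have h2' : A.D (A.oplus x y) t₂ := by rwa [A.oplus_comm _ _ h1] at h2
    obtain ⟨h4, h5, h6⟩ := A.assoc x y t₂ h1' h2'
    have : A.oplus y (A.oplus x t₂) = A.oplus x (A.oplus y t₂) := by
      rw [← h3, ← h6, A.oplus_comm _ _ h1]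
    rw [this]
    exact SumDef.cons (SumDef.cons ht₂ h4) h5
  | trans h1 h2 ih1 ih2 => exact fun hs => ih2 (ih1 hs)

lemma sumDef_unique {l : List E} {s s' : E} (h : A.SumDef l s) (h' : A.SumDef l s') :
    s = s' := by
  induction l generalizing s s' with
  | nil => rw [sumDef_nil_eq h, sumDef_nil_eq h']
  | cons x l ih =>
    obtain ⟨t, ht, hD, rfl⟩ := sumDef_cons_elim h
    obtain ⟨t', ht', hD', rfl⟩ := sumDef_cons_elim h'
    rw [ih ht ht']

lemma sumDef_le {ι : Type v} {x x' : ι → E} :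
    ∀ {l : List ι} {s s' : E}, A.SumDef (l.map x) s → A.SumDef (l.map x') s' →
      (∀ i ∈ l, A.le (x i) (x' i)) → A.le s s' := by
  intro l
  induction l with
  | nil =>
    intro s s' hs hs' _
    rw [sumDef_nil_eq hs, sumDef_nil_eq hs']
    exact le_refl _
  | cons i l ih =>
    intro s s' hs hs' hle
    obtain ⟨t, ht, hD, rfl⟩ := sumDef_cons_elim hs
    obtain ⟨t', ht', hD', rfl⟩ := sumDef_cons_elim hs'
    have h1 : A.le t t' := ih ht ht' (fun j hj => hle j (List.mem_cons_of_mem _ hj))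
    exact (oplus_le_oplus (hle i (List.mem_cons_self)) h1 hD').2

lemma mem_finiteSums_self {ι : Type v} (x : ι → E) (i : ι) :
    x i ∈ A.finiteSums x := by
  refine ⟨[i], List.nodup_singleton i, ?_⟩
  have : A.SumDef [x i] (A.oplus (x i) A.zero) :=
    SumDef.cons SumDef.nil (D_zero_right _)
  rwa [oplus_zero] at this

lemma zero_mem_finiteSums {ι : Type v} (x : ι → E) :
    A.zero ∈ A.finiteSums x := ⟨[], List.nodup_nil, SumDef.nil⟩

lemma orth_pair {ι : Type v} {d : ι → E} (hd : A.Orthogonal d) {i j : ι}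
    (h : i ≠ j) : A.D (d i) (d j) := by
  obtain ⟨s, hs⟩ := hd [i, j] (by simp [h])
  obtain ⟨t, ht, hD1, rfl⟩ := sumDef_cons_elim hs
  obtain ⟨t₂, ht₂, hD2, rfl⟩ := sumDef_cons_elim ht
  rw [sumDef_nil_eq ht₂, oplus_zero] at hD1
  exact hD1

end EffectAlgebra
namespace EffectAlgebra

variable {E : Type u} {A : EffectAlgebra E}

/-- Finite sums of an orthogonal family of central elements: the sum is central,
is the join of its members, and meets distribute. -/
lemma finite_sum_props {ι : Type v} {d : ι → E} (hd : A.Orthogonal d)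
    (hcent : ∀ i, A.Central (d i)) (md : E → ι → E)
    (hmd : ∀ y i, A.IsMeet y (d i) (md y i)) :
    ∀ l : List ι, l.Nodup → ∀ e, A.SumDef (l.map d) e →
      A.Central e ∧ A.IsSupIn Set.univ {a | a ∈ l.map d} e ∧
      ∀ y me, A.SumDef (l.map (md y)) me → A.IsMeet y e me := by
  intro l
  induction l with
  | nil =>
    intro _ e he
    rw [sumDef_nil_eq he]
    refine ⟨central_zero, ⟨trivial, ?_, fun z _ _ => zero_le z⟩, ?_⟩
    · intro a ha
      exact absurd ha List.not_mem_nil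
    · intro y me hme
      rw [sumDef_nil_eq hme]
      exact isMeet_zero_right y
  | cons i l ih =>
    intro hnd e he
    have hil : i ∉ l := (List.nodup_cons.mp hnd).1
    have hndl : l.Nodup := (List.nodup_cons.mp hnd).2
    obtain ⟨t, ht, hDt, rfl⟩ := sumDef_cons_elim he
    obtain ⟨hct, hsupt, hmeett⟩ := ih hndl t ht
    have hmem : ∀ a ∈ l.map d, A.le a (A.compl (d i)) := by
      intro a ha
      obtain ⟨j, hj, rfl⟩ := List.mem_map.mp ha
      have hij : i ≠ j := fun h => hil (h ▸ hj)
      exact le_compl_of_D (orth_pair hd hij)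
    have hts : A.le t (A.compl (d i)) := hsupt.2.2 _ trivial hmem
    have hj := central_join_oplus (hcent i) (le_refl (d i)) hts
    have hcmpl : A.IsMeet (A.compl (d i)) (A.compl t) (A.compl (A.oplus (d i) t)) := by
      refine isMeet_intro (compl_le_compl (le_oplus_left hDt))
        (compl_le_compl (le_oplus_right hDt)) ?_
      intro z hz1 hz2
      have h1 : A.le (d i) (A.compl z) := by
        refine le_of_compl_le_compl ?_; rwa [compl_compl]
      have h2 : A.le t (A.compl z) := by
        refine le_of_compl_le_compl ?_; rwa [compl_compl]
      refine le_of_compl_le_compl ?_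
      rw [compl_compl]
      exact hj.2.le h1 h2
    have hce : A.Central (A.oplus (d i) t) := by
      have := (central_meet (hcent i).compl hct.compl hcmpl).compl
      rwa [compl_compl] at this
    have hmeet_t : A.IsMeet (A.oplus (d i) t) (A.compl (d i)) t :=
      (central_meet_oplus (hcent i) (le_refl (d i)) hts hDt).2
    refine ⟨hce, ⟨trivial, ?_, ?_⟩, ?_⟩
    · -- upper bound of members
      rintro a ha
      rcases List.mem_cons.mp ha with rfl | ha'
      · exact le_oplus_left hDt
      · exact le_trans (hsupt.2.1 a ha') (le_oplus_right hDt)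
    · -- least upper bound of members
      intro z _ hz
      have h1 : A.le (d i) z := hz _ (List.mem_cons_self)
      have h2 : A.le t z := hsupt.2.2 z trivial
        (fun a ha => hz a (List.mem_cons_of_mem _ ha))
      exact hj.2.le h1 h2
    · -- meets
      intro y me hme
      obtain ⟨mt, hmt, hDm, rfl⟩ := sumDef_cons_elim hme
      have hmtt : A.IsMeet y t mt := hmeett y mt hmt
      have hmyi := hmd y i
      have hjm := central_join_oplus (hcent i) hmyi.le_right
        (le_trans hmtt.le_right hts)
      refine isMeet_intro (hjm.2.le hmyi.le_left hmtt.le_left) ?_ ?_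
      · exact (oplus_le_oplus hmyi.le_right hmtt.le_right hDt).2
      · intro z hz1 hz2
        obtain ⟨p, q, hp, hq, hDpq, heqz⟩ := central_decomp (hcent i) z
        have h1 : A.le p (md y i) :=
          hmyi.ge (le_trans hp.le_left hz1) hp.le_right
        have h2 : A.le q mt := by
          refine hmtt.ge (le_trans hq.le_left hz1) ?_
          exact hmeet_t.ge (le_trans hq.le_left hz2) hq.le_right
        have := (oplus_le_oplus h1 h2 hDm).2
        rwa [heqz] at this
  
end EffectAlgebra
namespace EffectAlgebra

variable {E : Type u} {A : EffectAlgebra E}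

lemma le_compl_comm {x y : E} (h : A.le x (A.compl y)) : A.le y (A.compl x) :=
  le_compl_of_D (D_of_le_compl h)

/-- `c ⊕ t` of central summands (with `t ≤ c'`) is central and their join. -/
lemma central_oplus {c t : E} (hc : A.Central c) (hct : A.Central t)
    (hts : A.le t (A.compl c)) :
    A.D c t ∧ A.Central (A.oplus c t) ∧ A.IsJoin c t (A.oplus c t) := by
  have hj := central_join_oplus hc (le_refl c) hts
  refine ⟨hj.1, ?_, hj.2⟩
  have hcmpl : A.IsMeet (A.compl c) (A.compl t) (A.compl (A.oplus c t)) := by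
    refine isMeet_intro (compl_le_compl (le_oplus_left hj.1))
      (compl_le_compl (le_oplus_right hj.1)) ?_
    intro z hz1 hz2
    have h1 : A.le c (A.compl z) := by
      refine le_of_compl_le_compl ?_; rwa [compl_compl]
    have h2 : A.le t (A.compl z) := by
      refine le_of_compl_le_compl ?_; rwa [compl_compl]
    refine le_of_compl_le_compl ?_
    rw [compl_compl]
    exact hj.2.le h1 h2
  have := (central_meet hc.compl hct.compl hcmpl).compl
  rwa [compl_compl] at this

/-- Lists of pairwise disjoint central elements have central sums which are
joins of their members. -/
lemma disjoint_list_sum :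
    ∀ l : List E, l.Nodup → (∀ a ∈ l, A.Central a) →
      (∀ a ∈ l, ∀ b ∈ l, a ≠ b → ∀ t, A.le t a → A.le t b → t = A.zero) →
      ∃ e, A.SumDef l e ∧ A.Central e ∧ A.IsSupIn Set.univ {a | a ∈ l} e := by
  intro l
  induction l with
  | nil =>
    intro _ _ _
    refine ⟨A.zero, SumDef.nil, central_zero, trivial, ?_, fun z _ _ => zero_le z⟩
    intro a ha
    exact absurd ha List.not_mem_nil
  | cons c l ih =>
    intro hnd hcent hdisj
    have hcl : c ∉ l := (List.nodup_cons.mp hnd).1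
    obtain ⟨t, ht, hct, hsupt⟩ := ih (List.nodup_cons.mp hnd).2
      (fun a ha => hcent a (List.mem_cons_of_mem _ ha))
      (fun a ha b hb => hdisj a (List.mem_cons_of_mem _ ha) b (List.mem_cons_of_mem _ hb))
    have hcc : A.Central c := hcent c (List.mem_cons_self)
    have hmem : ∀ a ∈ l, A.le a (A.compl c) := by
      intro a ha
      have hac : a ≠ c := fun h => hcl (h ▸ ha)
      obtain ⟨p, q, hp, hq, hD, heq⟩ := central_decomp hcc a
      have hp0 : p = A.zero :=
        hdisj a (List.mem_cons_of_mem _ ha) c (List.mem_cons_self) hac p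
          hp.le_left hp.le_right
      have : a = q := by rw [← heq, hp0, zero_oplus]
      rw [this]
      exact hq.le_right
    have hts : A.le t (A.compl c) := hsupt.2.2 _ trivial hmem
    obtain ⟨hD, hce, hj⟩ := central_oplus hcc hct hts
    refine ⟨A.oplus c t, SumDef.cons ht hD, hce, trivial, ?_, ?_⟩
    · rintro a ha
      rcases List.mem_cons.mp ha with rfl | ha'
      · exact le_oplus_left hD
      · exact le_trans (hsupt.2.1 a ha') (le_oplus_right hD)
    · intro z _ hz
      exact hj.le (hz _ (List.mem_cons_self))
        (hsupt.2.2 z trivial (fun a ha => hz a (List.mem_cons_of_mem _ ha)))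

lemma filterMap_of_none_not_mem {ι : Type v} :
    ∀ {l : List (Option ι)}, none ∉ l →
      (∀ (g : Option ι → E), l.map g = (l.filterMap id).map (fun i => g (some i))) ∧
        (l.Nodup → (l.filterMap id).Nodup) := by
  intro l
  induction l with
  | nil => intro _; exact ⟨fun g => rfl, fun _ => List.nodup_nil⟩
  | cons o t ih =>
    intro h
    have hot : none ∉ t := fun h' => h (List.mem_cons_of_mem _ h')
    obtain ⟨hmap, hnd⟩ := ih hot
    cases o with
    | none => exact absurd (List.mem_cons_self) h
    | some i =>
      constructor
      · intro g
        simp only [List.filterMap_cons, id]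
        rw [List.map_cons, List.map_cons, hmap g]
        rfl
      · intro hnd2
        simp only [List.filterMap_cons, id]
        rw [List.nodup_cons]
        refine ⟨?_, hnd (List.nodup_cons.mp hnd2).2⟩
        intro hmem
        obtain ⟨a, ha, ha2⟩ := List.mem_filterMap.mp hmem
        have : a = some i := ha2
        exact (List.nodup_cons.mp hnd2).1 (this ▸ ha)

end EffectAlgebra
namespace EffectAlgebra

variable {E : Type u} {A : EffectAlgebra E}

/-- The orthosum of an orthogonal family of central elements is central. -/
lemma orthosum_central {ι : Type u} (hSO : A.SharplyOrthocomplete)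
    (hdom : A.SharplyDominating) {d : ι → E} (hd : A.Orthogonal d)
    (hcent : ∀ i, A.Central (d i)) {v : E}
    (hv : A.IsSupIn Set.univ (A.finiteSums d) v) : A.Central v := by
  classical
  have hmeets : ∀ y i, ∃ m, A.IsMeet y (d i) m := fun y i =>
    central_meet_exists (hcent i) y
  choose md hmd using hmeets
  have hFL := finite_sum_props hd hcent md hmd
  choose sc hsc1 hsc2 hsc3 hsc4 using hdom
  clear hsc4
  have hsc_min : ∀ x w, A.Sharp w → A.le x w → A.le (sc x) w := fun x w hw hxw =>
    (hsc3 x).2.1 w ⟨hw, hxw⟩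
  have hdv : ∀ i, A.le (d i) v := fun i => hv.2.1 _ (mem_finiteSums_self d i)
  have hm_ex : ∀ y, ∃ m, A.IsSupIn Set.univ (A.finiteSums (md y)) m ∧
      A.Orthogonal (md y) := by
    intro y
    obtain ⟨m, h1, h2⟩ := hSO ι (md y) d (fun i => (hcent i).sharp) hd
      (fun i => (hmd y i).le_right)
    exact ⟨m, h2, h1⟩
  choose m hmsup hmorth using hm_ex
  have hm_le_y : ∀ y, A.le (m y) y := by
    intro y
    refine (hmsup y).2.2 y trivial ?_
    rintro s ⟨l, hlnd, hls⟩
    obtain ⟨e, he⟩ := hd l hlnd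
    exact ((hFL l hlnd e he).2.2 y s hls).le_left
  have hm_le_v : ∀ y, A.le (m y) v := by
    intro y
    refine (hmsup y).2.2 v trivial ?_
    rintro s ⟨l, hlnd, hls⟩
    obtain ⟨e, he⟩ := hd l hlnd
    exact le_trans ((hFL l hlnd e he).2.2 y s hls).le_right (hv.2.1 e ⟨l, hlnd, he⟩)
  choose r hDr hr_eq using hm_le_y
  have hm_le_y : ∀ y, A.le (m y) y := fun y => ⟨r y, hDr y, hr_eq y⟩
  have hr_le_y : ∀ y, A.le (r y) y := by
    intro y
    have := le_oplus_right (hDr y)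
    rwa [hr_eq y] at this
  -- Step Ia : r y ≤ (d i)'
  have hIa : ∀ y i, A.le (r y) (A.compl (d i)) := by
    intro y i
    obtain ⟨p, hp, hpeq⟩ := (hmsup y).2.1 _ (mem_finiteSums_self (md y) i)
    obtain ⟨a, b, ha, hb, hab, habeq⟩ := central_decomp (hcent i) y
    have ham : a = md y i := isInfIn_unique ha (hmd y i)
    have h2 : A.D (A.oplus (md y i) p) (r y) := by rw [hpeq]; exact hDr y
    obtain ⟨h3, h4, h5⟩ := A.assoc (md y i) p (r y) hp h2
    have hab' : A.D (md y i) b := ham ▸ hab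
    have h6 : A.oplus (md y i) (A.oplus p (r y)) = A.oplus (md y i) b := by
      rw [← h5, hpeq, hr_eq y, ← ham]
      exact habeq.symm
    have h7 : A.oplus p (r y) = b := cancel h4 hab' h6
    have h8 : A.le (r y) b := by rw [← h7]; exact le_oplus_right h3
    exact le_trans h8 hb.le_right
  -- r y ≤ e' for each finite sum
  have hIb : ∀ y (l : List ι), l.Nodup → ∀ e, A.SumDef (l.map d) e →
      A.le (r y) (A.compl e) := by
    intro y l hlnd e he
    refine le_compl_comm ?_
    refine (hFL l hlnd e he).2.1.2.2 _ trivial ?_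
    rintro a ha2
    obtain ⟨j, _, rfl⟩ := List.mem_map.mp ha2
    exact le_compl_comm (hIa y j)
  -- Step I : r y ≤ v'
  have hI : ∀ y, A.le (r y) (A.compl v) := by
    intro y
    set x' : Option ι → E := fun o => o.elim (r y) d with hx'
    set w' : Option ι → E := fun o => o.elim (sc (r y)) d with hw'
    have hx'n : x' none = r y := rfl
    have hx's : ∀ i, x' (some i) = d i := fun i => rfl
    have horthw : A.Orthogonal w' := by
      intro l hlnd
      by_cases hn : (none : Option ι) ∈ l
      · obtain ⟨l₀, hperm⟩ : ∃ l₀, l.Perm (none :: l₀) := ⟨_, List.perm_cons_erase hn⟩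
        have hnd2 : (none :: l₀).Nodup := hperm.nodup hlnd
        have h0 : (none : Option ι) ∉ l₀ := (List.nodup_cons.mp hnd2).1
        have hndl₀ : l₀.Nodup := (List.nodup_cons.mp hnd2).2
        obtain ⟨hmapf, hndf⟩ := filterMap_of_none_not_mem (E := E) h0
        obtain ⟨e, he⟩ := hd _ (hndf hndl₀)
        have hDe : A.D (sc (r y)) e := by
          refine D_of_le_compl (hsc_min _ _ ?_ ?_)
          · exact ((hFL _ (hndf hndl₀) e he).1.sharp).compl
          · exact hIb y _ (hndf hndl₀) e he
        have hmw : l₀.map w' = (l₀.filterMap id).map d := hmapf w'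
        have hsum : A.SumDef ((none :: l₀).map w') (A.oplus (sc (r y)) e) := by
          rw [List.map_cons, hmw]
          exact SumDef.cons he hDe
        exact ⟨_, sumDef_perm (hperm.map w').symm hsum⟩
      · obtain ⟨hmapf, hndf⟩ := filterMap_of_none_not_mem (E := E) hn
        obtain ⟨e, he⟩ := hd _ (hndf hlnd)
        refine ⟨e, ?_⟩
        have hmw : l.map w' = (l.filterMap id).map d := hmapf w'
        rw [hmw]
        exact he
    obtain ⟨u, horthx, husup⟩ := hSO (Option ι) x' w'
      (fun k => by cases k with
        | none => exact hsc1 _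
        | some i => exact (hcent i).sharp)
      horthw
      (fun k => by cases k with
        | none => exact hsc2 _
        | some i => exact le_refl _)
    have hru : A.le (r y) u := husup.2.1 _ (mem_finiteSums_self x' none)
    obtain ⟨p, hDp, hpeq⟩ := hru
    have hep : ∀ s ∈ A.finiteSums d, A.le s p := by
      rintro e ⟨l, hlnd, he⟩
      have hDre : A.D (r y) e := D_of_le_compl (hIb y l hlnd e he)
      have hsum : A.SumDef ((none :: l.map some).map x') (A.oplus (r y) e) := by
        rw [List.map_cons]
        have : (l.map some).map x' = l.map d := by rw [List.map_map]; rfl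
        rw [this]
        exact SumDef.cons he hDre
      have hmem : A.oplus (r y) e ∈ A.finiteSums x' := by
        refine ⟨none :: l.map some, ?_, hsum⟩
        rw [List.nodup_cons]
        exact ⟨by simp, hlnd.map (Option.some_injective ι)⟩
      have hle := husup.2.1 _ hmem
      rw [← hpeq] at hle
      exact le_cancel hDre hDp hle
    have hvp : A.le v p := hv.2.2 p trivial hep
    obtain ⟨q, hq, hqe⟩ := hvp
    have hDp' : A.D (r y) (A.oplus v q) := by rwa [← hqe] at hDp
    exact le_compl_iff_D.mpr (A.assoc' (r y) v q hq hDp').1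
  -- Step II : r y = y ∧ v'
  have hII : ∀ y, A.IsMeet y (A.compl v) (r y) := by
    intro y
    refine isMeet_intro (hr_le_y y) (hI y) ?_
    intro t ht1 ht2
    obtain ⟨z, hDz, hzeq⟩ := id ht1
    have hsz : ∀ s ∈ A.finiteSums (md y), A.le s z := by
      rintro s ⟨l, hlnd, hls⟩
      obtain ⟨e, he⟩ := hd l hlnd
      have hmeet := (hFL l hlnd e he).2.2 y s hls
      have hce := (hFL l hlnd e he).1
      have hte : A.le t (A.compl e) :=
        le_trans ht2 (compl_le_compl (hv.2.1 e ⟨l, hlnd, he⟩))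
      have hj := central_join_oplus hce hmeet.le_right hte
      have hsty : A.le (A.oplus s t) y := hj.2.le hmeet.le_left ht1
      have h4 : A.le (A.oplus t s) (A.oplus t z) := by
        rw [← A.oplus_comm _ _ hj.1, hzeq]
        exact hsty
      exact le_cancel (A.D_comm _ _ hj.1) hDz h4
    have hmz : A.le (m y) z := (hmsup y).2.2 z trivial hsz
    have h2 := oplus_le_oplus (le_refl t) hmz hDz
    have e1 : A.oplus (m y) t = A.oplus t (m y) := A.oplus_comm _ _ (A.D_comm _ _ h2.1)
    have e2 : A.oplus (m y) (r y) = A.oplus t z := by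
      rw [hr_eq y]
      exact hzeq.symm
    exact le_cancel (A.D_comm _ _ h2.1) (hDr y) (by rw [e1, e2]; exact h2.2)
  -- v itself: m v = v, r v = 0, hence v is "sharp"
  have hmdv : md v = d := funext fun i =>
    isInfIn_unique (hmd v i) (isMeet_intro (hdv i) (le_refl _) (fun z _ h2 => h2))
  have hmv : m v = v := by
    have h := hmsup v
    rw [hmdv] at h
    exact isSupIn_unique h hv
  have hrv : r v = A.zero := by
    have h := hr_eq v
    rw [hmv] at h
    have hDv' := hDr v
    rw [hmv] at hDv'
    exact cancel hDv' (D_zero_right v) (by rw [h, oplus_zero])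
  have hsharp : ∀ t, A.le t v → A.le t (A.compl v) → t = A.zero := by
    intro t h1 h2
    have := (hII v).ge h1 h2
    rw [hrv] at this
    exact le_zero_iff.mp this
  -- Step III : m y = y ∧ v
  have hIII : ∀ y, A.IsMeet y v (m y) := by
    intro y
    refine isMeet_intro (hm_le_y y) (hm_le_v y) ?_
    intro t ht1 ht2
    have hmt : A.le (m t) (m y) := by
      refine (hmsup t).2.2 _ trivial ?_
      rintro s ⟨l, hlnd, hls⟩
      obtain ⟨s', hs'⟩ := hmorth y l hlnd
      have hle : A.le s s' := sumDef_le hls hs' (fun i _ =>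
        (hmd y i).ge (le_trans (hmd t i).le_left ht1) (hmd t i).le_right)
      exact le_trans hle ((hmsup y).2.1 s' ⟨l, hlnd, hs'⟩)
    have hrt : r t = A.zero := hsharp (r t) (le_trans (hr_le_y t) ht2) (hI t)
    have h5 : m t = t := by
      conv_rhs => rw [← hr_eq t]
      rw [hrt, oplus_zero]
    rw [← h5]
    exact hmt
  exact central_of_decomp (fun y => ⟨m y, r y, hIII y, hII y, hDr y, hr_eq y⟩)

end EffectAlgebra
namespace EffectAlgebra

variable {E : Type u} {A : EffectAlgebra E}

/-- Every subset of the center has a central supremum in `E`. -/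
lemma central_sup_exists (hSO : A.SharplyOrthocomplete) (hSD : A.SDominating)
    (S : Set E) (hS : S ⊆ A.centerSet) :
    ∃ v, A.Central v ∧ A.IsSupIn Set.univ S v := by
  classical
  set 𝒟 : Set (Set E) := {D | D ⊆ A.centerSet ∧
    (∀ a ∈ D, ∀ b ∈ D, a ≠ b → ∀ t, A.le t a → A.le t b → t = A.zero) ∧
    ∀ a ∈ D, ∃ s ∈ S, A.le a s} with h𝒟
  obtain ⟨D₀, hD₀⟩ := zorn_subset 𝒟 (by
    intro c hc hchain
    refine ⟨⋃₀ c, ⟨?_, ?_, ?_⟩, fun s hs => Set.subset_sUnion_of_mem hs⟩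
    · rintro a ⟨D, hD, haD⟩
      exact (hc hD).1 haD
    · rintro a ⟨D, hD, haD⟩ b ⟨D', hD', hbD'⟩ hab t hta htb
      rcases hchain.total hD hD' with h | h
      · exact (hc hD').2.1 a (h haD) b hbD' hab t hta htb
      · exact (hc hD).2.1 a haD b (h hbD') hab t hta htb
    · rintro a ⟨D, hD, haD⟩
      exact (hc hD).2.2 a haD)
  obtain ⟨⟨hD₀C, hD₀disj, hD₀S⟩, hD₀max⟩ := hD₀
  set d : ↥D₀ → E := Subtype.val with hdval
  have hcent : ∀ i : ↥D₀, A.Central (d i) := fun i => hD₀C i.2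
  have hd : A.Orthogonal d := by
    intro l hlnd
    obtain ⟨e, he, _, _⟩ := disjoint_list_sum (l.map d) (hlnd.map Subtype.val_injective)
      (by rintro a ha
          obtain ⟨j, _, rfl⟩ := List.mem_map.mp ha
          exact hcent j)
      (by rintro a ha b hb hab t hta htb
          obtain ⟨j, _, rfl⟩ := List.mem_map.mp ha
          obtain ⟨k, _, rfl⟩ := List.mem_map.mp hb
          exact hD₀disj _ j.2 _ k.2 hab t hta htb)
    exact ⟨e, he⟩
  obtain ⟨v, _, hvsup⟩ := hSO ↥D₀ d d (fun i => (hcent i).sharp) hd (fun i => le_refl _)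
  have hvc : A.Central v := orthosum_central hSO hSD.1 hd hcent hvsup
  have hD₀v : ∀ a ∈ D₀, A.le a v := fun a ha =>
    hvsup.2.1 _ (mem_finiteSums_self d ⟨a, ha⟩)
  have hUB : ∀ s ∈ S, A.le s v := by
    intro s hs
    obtain ⟨m₁, m₂, hm₁, hm₂, hD12, heq⟩ := central_decomp hvc s
    have ht0 : m₂ = A.zero := by
      by_contra ht
      have htc : A.Central m₂ := central_meet (hS hs) hvc.compl hm₂
      have htnD : m₂ ∉ D₀ := by
        intro hmem
        exact ht (hvc.sharp.2.2 m₂ trivial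
          (isLB_pair (hD₀v m₂ hmem) hm₂.le_right) |> le_zero_iff.mp)
      have hins : insert m₂ D₀ ∈ 𝒟 := by
        refine ⟨?_, ?_, ?_⟩
        · rintro a (rfl | ha)
          · exact htc
          · exact hD₀C ha
        · rintro a (rfl | ha) b (rfl | hb) hab t hta htb
          · exact absurd rfl hab
          · refine le_zero_iff.mp (hvc.sharp.2.2 t trivial
              (isLB_pair (le_trans htb (hD₀v b hb)) (le_trans hta hm₂.le_right)))
          · refine le_zero_iff.mp (hvc.sharp.2.2 t trivial
              (isLB_pair (le_trans hta (hD₀v a ha)) (le_trans htb hm₂.le_right)))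
          · exact hD₀disj a ha b hb hab t hta htb
        · rintro a (rfl | ha)
          · exact ⟨s, hs, hm₂.le_left⟩
          · exact hD₀S a ha
      have := hD₀max hins (Set.subset_insert _ _)
      exact htnD (this (Set.mem_insert _ _))
    have : s = m₁ := by rw [← heq, ht0, oplus_zero]
    rw [this]
    exact hm₁.le_right
  refine ⟨v, hvc, trivial, hUB, ?_⟩
  intro u _ hu
  refine hvsup.2.2 u trivial ?_
  rintro e ⟨l, hlnd, he⟩
  obtain ⟨e', he', _, hsupe⟩ := disjoint_list_sum (l.map d) (hlnd.map Subtype.val_injective)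
    (by rintro a ha
        obtain ⟨j, _, rfl⟩ := List.mem_map.mp ha
        exact hcent j)
    (by rintro a ha b hb hab t hta htb
        obtain ⟨j, _, rfl⟩ := List.mem_map.mp ha
        obtain ⟨k, _, rfl⟩ := List.mem_map.mp hb
        exact hD₀disj _ j.2 _ k.2 hab t hta htb)
  rw [sumDef_unique he he']
  refine hsupe.2.2 u trivial ?_
  rintro a ha
  obtain ⟨j, _, rfl⟩ := List.mem_map.mp ha
  obtain ⟨s, hsS, hsle⟩ := hD₀S _ j.2
  exact le_trans hsle (hu s hsS)

end EffectAlgebra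
namespace EffectAlgebra

variable {E : Type u} {A : EffectAlgebra E}

lemma mem_centerSet {c : E} : c ∈ A.centerSet ↔ A.Central c := Iff.rfl

lemma completeIn_center (hSO : A.SharplyOrthocomplete) (hSD : A.SDominating) :
    A.CompleteIn A.centerSet := by
  intro S hS
  constructor
  · obtain ⟨v, hvc, hvs⟩ := central_sup_exists hSO hSD S hS
    exact ⟨v, isSupIn_of_univ hvs hvc⟩
  · have hT : A.compl '' S ⊆ A.centerSet := by
      rintro t ⟨s, hs, rfl⟩
      exact (hS hs).compl
    obtain ⟨j, hjc, hjs⟩ := central_sup_exists hSO hSD (A.compl '' S) hT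
    refine ⟨A.compl j, hjc.compl, ?_, ?_⟩
    · intro s hs
      have h1 : A.le (A.compl s) j := hjs.2.1 _ ⟨s, hs, rfl⟩
      have := compl_le_compl (A := A) h1
      rwa [compl_compl] at this
    · intro z _ hz
      have h1 : A.le j (A.compl z) := by
        refine hjs.2.2 _ trivial ?_
        rintro t ⟨s, hs, rfl⟩
        exact compl_le_compl (hz s hs)
      refine le_of_compl_le_compl ?_
      rwa [compl_compl]

lemma booleanIn_center : A.BooleanIn A.centerSet := by
  refine ⟨?_, central_zero, central_one, fun x hx => Central.compl hx, ?_, ?_⟩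
  · intro x hx y hy
    constructor
    · obtain ⟨m, hm⟩ := central_meet_exists hy x
      exact ⟨m, isInfIn_of_univ hm (central_meet hx hy hm)⟩
    · obtain ⟨j, hj, hjc⟩ := central_join_exists hx hy
      exact ⟨j, isSupIn_of_univ hj hjc⟩
  · intro x hx
    exact ⟨isInfIn_of_univ hx.sharp central_zero,
      isSupIn_of_univ (central_join_compl hx) central_one⟩
  · intro x hx y hy z hz jyz mxy mxz m hjyz hmxy hmxz hm
    obtain ⟨j₀, hj₀, hj₀c⟩ := central_join_exists hy hz
    have ej : jyz = j₀ := isSupIn_unique hjyz (isSupIn_of_univ hj₀ hj₀c)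
    subst ej
    obtain ⟨my₀, hmy₀⟩ := central_meet_exists hy x
    have ey : mxy = my₀ := isInfIn_unique hmxy
      (isInfIn_of_univ hmy₀ (central_meet hx hy hmy₀))
    subst ey
    obtain ⟨mz₀, hmz₀⟩ := central_meet_exists hz x
    have ez : mxz = mz₀ := isInfIn_unique hmxz
      (isInfIn_of_univ hmz₀ (central_meet hx hz hmz₀))
    subst ez
    obtain ⟨m₀, hm₀⟩ := central_meet_exists hj₀c x
    have em : m = m₀ := isInfIn_unique hm
      (isInfIn_of_univ hm₀ (central_meet hx hj₀c hm₀))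
    subst em
    exact isSupIn_of_univ
      (central_distrib hx hj₀ (isMeet_comm hm₀) (isMeet_comm hmy₀) (isMeet_comm hmz₀))
      hm.1

lemma bifull_center (hSO : A.SharplyOrthocomplete) (hSD : A.SDominating) :
    A.Bifull A.centerSet := by
  intro S hS
  obtain ⟨v, hvc, hvs⟩ := central_sup_exists hSO hSD S hS
  constructor
  · intro s hs
    have : s = v := isSupIn_unique hs (isSupIn_of_univ hvs hvc)
    rw [this]
    exact hvs
  · intro s hs
    have : s = v := isSupIn_unique hs hvs
    rw [this]
    exact isSupIn_of_univ hvs hvc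

end EffectAlgebra

/-- In a sharply orthocomplete S-dominating effect algebra, the center `C(E)` is
a complete Boolean algebra bifull in `E`. -/
theorem stmt9 {E : Type u} (A : EffectAlgebra E)
    (hSO : A.SharplyOrthocomplete) (hSD : A.SDominating) :
    A.CompleteIn A.centerSet ∧ A.BooleanIn A.centerSet ∧
      A.Bifull A.centerSet :=
  ⟨EffectAlgebra.completeIn_center hSO hSD, EffectAlgebra.booleanIn_center,
    EffectAlgebra.bifull_center hSO hSD⟩
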